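/- arXiv:2204.04269 — 4 statements merged into one kernel-verified Lean document; each statement's English description precedes it below -/
import Mathlib

section
/- Let G be a graph with e(G) = k edges (k even, k ≥ 2) that contains a vertex x of degree k/2 and has matching number β(G) ≥ k/2. Then every vertex v of G satisfies deg(v) ≤ 3 or deg(v) = k/2. -/
open SimpleGraph

/-- The matching number of a graph: the largest size (number of edges) of a matching. -/
noncomputable def matchingNumber {V : Type*} (G : SimpleGraph V) : ℕ :=
  sSup {m | ∃ M : G.Subgraph, M.IsMatching ∧ M.edgeSet.ncard = m}

theorem stmt1 {V : Type*} [Fintype V] [DecidableEq V] (G : SimpleGraph V)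
    [DecidableRel G.Adj] (k : ℕ) (hk2 : 2 ≤ k) (hke : Even k)
    (hedges : G.edgeFinset.card = k) (x : V) (hx : G.degree x = k / 2)
    (hβ : k / 2 ≤ matchingNumber G) :
    ∀ v : V, G.degree v ≤ 3 ∨ G.degree v = k / 2 := by
  classical
  -- Extract a matching of size ≥ k/2
  have hbdd : BddAbove {m | ∃ M : G.Subgraph, M.IsMatching ∧ M.edgeSet.ncard = m} := by
    refine ⟨k, fun m hm => ?_⟩
    obtain ⟨M, _, rfl⟩ := hm
    calc M.edgeSet.ncard ≤ G.edgeSet.ncard :=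
          Set.ncard_le_ncard M.edgeSet_subset G.edgeSet.toFinite
      _ = k := by rw [← hedges, ← Set.ncard_coe_finset, coe_edgeFinset]
  have hnonempty : Set.Nonempty {m | ∃ M : G.Subgraph, M.IsMatching ∧ M.edgeSet.ncard = m} :=
    ⟨0, ⊥, fun w hw => absurd hw (by simp), by simp⟩
  have hmem := Nat.sSup_mem hnonempty hbdd
  obtain ⟨M, hM, hcard⟩ := hmem
  rw [matchingNumber, ← hcard] at hβ
  set E : Finset (Sym2 V) := G.edgeFinset with hE
  set MF : Finset (Sym2 V) := E.filter (· ∈ M.edgeSet) with hMF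
  have hMFE : MF ⊆ E := Finset.filter_subset _ _
  have hMFcoe : (↑MF : Set (Sym2 V)) = M.edgeSet := by
    ext e
    simp only [hMF, Finset.coe_filter, Set.mem_setOf_eq, hE, mem_edgeFinset]
    exact ⟨fun h => h.2, fun h => ⟨M.edgeSet_subset h, h⟩⟩
  have hMFcard : k / 2 ≤ MF.card := by
    rwa [← hMFcoe, Set.ncard_coe_finset] at hβ
  -- In a matching, at most one edge at each vertex
  have hmatch : ∀ u : V, (MF.filter (fun e => u ∈ e)).card ≤ 1 := by
    intro u
    rw [Finset.card_le_one]
    intro e1 h1 e2 h2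
    simp only [Finset.mem_filter, hMF] at h1 h2
    obtain ⟨⟨_, he1⟩, hu1⟩ := h1
    obtain ⟨⟨_, he2⟩, hu2⟩ := h2
    obtain ⟨w1, rfl⟩ := Sym2.mem_iff_exists.mp hu1
    obtain ⟨w2, rfl⟩ := Sym2.mem_iff_exists.mp hu2
    rw [Subgraph.mem_edgeSet] at he1 he2
    obtain ⟨w, _, huniq⟩ := hM (M.edge_vert he1)
    rw [huniq w1 he1, huniq w2 he2]
  -- incidence finsets
  have hinc : ∀ u : V, (E.filter (fun e => u ∈ e)).card = G.degree u := by
    intro u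
    rw [← card_incidenceFinset_eq_degree, incidenceFinset_eq_filter]
  set N : Finset (Sym2 V) := E \ MF with hN
  have hNcard : N.card + MF.card = k := by
    rw [hN, Finset.card_sdiff_of_subset hMFE, hedges, Nat.sub_add_cancel (hedges ▸ Finset.card_le_card hMFE)]
  set Ix : Finset (Sym2 V) := E.filter (fun e => x ∈ e) with hIx
  -- at least k/2 - 1 edges at x are non-matching
  have hsplit : (Ix ∩ MF).card + (Ix \ MF).card = k / 2 := by
    rw [Finset.card_inter_add_card_sdiff, hIx, hinc, hx]
  have hIxMF : (Ix ∩ MF).card ≤ 1 := by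
    refine le_trans (Finset.card_le_card ?_) (hmatch x)
    intro e he
    simp only [Finset.mem_inter, hIx, Finset.mem_filter] at he
    simp only [Finset.mem_filter]
    exact ⟨he.2, he.1.2⟩
  have hIxN : Ix \ MF ⊆ N ∩ Ix := by
    intro e he
    rw [Finset.mem_sdiff] at he
    rw [Finset.mem_inter, hN, Finset.mem_sdiff]
    exact ⟨⟨(Finset.mem_filter.mp he.1).1, he.2⟩, he.1⟩
  have hkeven : k / 2 * 2 = k := Nat.div_mul_cancel hke.two_dvd
  have hNIx : (N \ Ix).card ≤ 1 := by
    have h1 : (N ∩ Ix).card + (N \ Ix).card = N.card := Finset.card_inter_add_card_sdiff N Ix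
    have h2 : (Ix \ MF).card ≤ (N ∩ Ix).card := Finset.card_le_card hIxN
    omega
  intro v
  by_cases hvx : v = x
  · right; rw [hvx, hx]
  left
  set Iv : Finset (Sym2 V) := E.filter (fun e => v ∈ e) with hIv
  have hsub : Iv ⊆ (Iv ∩ MF) ∪ ({s(v, x)} ∪ (N \ Ix)) := by
    intro e he
    have hve : v ∈ e := (Finset.mem_filter.mp he).2
    rw [Finset.mem_union, Finset.mem_union]
    by_cases heM : e ∈ MF
    · exact Or.inl (Finset.mem_inter.mpr ⟨he, heM⟩)
    by_cases hex : x ∈ e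
    · refine Or.inr (Or.inl ?_)
      rw [Finset.mem_singleton]
      exact (Sym2.mem_and_mem_iff hvx).mp ⟨hve, hex⟩
    · refine Or.inr (Or.inr ?_)
      rw [Finset.mem_sdiff, hN, Finset.mem_sdiff]
      refine ⟨⟨(Finset.mem_filter.mp he).1, heM⟩, ?_⟩
      rw [hIx, Finset.mem_filter]
      exact fun h => hex h.2
  have hIvMF : (Iv ∩ MF).card ≤ 1 := by
    refine le_trans (Finset.card_le_card ?_) (hmatch v)
    intro e he
    simp only [Finset.mem_inter, hIv, Finset.mem_filter] at he
    simp only [Finset.mem_filter]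
    exact ⟨he.2, he.1.2⟩
  calc G.degree v = Iv.card := (hinc v).symm
    _ ≤ ((Iv ∩ MF) ∪ ({s(v, x)} ∪ (N \ Ix))).card := Finset.card_le_card hsub
    _ ≤ (Iv ∩ MF).card + ({s(v, x)} ∪ (N \ Ix)).card := Finset.card_union_le _ _
    _ ≤ (Iv ∩ MF).card + ((({s(v, x)} : Finset (Sym2 V)).card) + (N \ Ix).card) :=
        Nat.add_le_add_left (Finset.card_union_le _ _) _
    _ ≤ 1 + (1 + 1) := by
        have := Finset.card_singleton (s(v, x))
        omega
    _ = 3 := rfl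
end

section
/- Let G be a graph with e(G) = k edges where k ≥ 2 is even, containing a vertex x with deg(x) = k/2 and with matching number β(G) ≥ k/2. Then there exists an edge e of G such that the edge set of G − e can be partitioned into a star K_{1,k/2} centered at x and a matching of k/2 − 1 pairwise non-incident edges. -/
open SimpleGraph

theorem stmt3 {V : Type*} [Fintype V] [DecidableEq V] (G : SimpleGraph V)
    [DecidableRel G.Adj] (k : ℕ) (hk2 : 2 ≤ k) (hke : Even k)
    (hedges : G.edgeFinset.card = k) (x : V) (hx : G.degree x = k / 2)
    (hβ : k / 2 ≤ matchingNumber G) :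
    ∃ e ∈ G.edgeFinset, ∃ S M : Finset (Sym2 V),
      Disjoint S M ∧ S ∪ M = G.edgeFinset.erase e ∧
      S.card = k / 2 ∧ (∀ f ∈ S, x ∈ f) ∧
      M.card = k / 2 - 1 ∧
      (∀ f ∈ M, ∀ g ∈ M, f ≠ g → ∀ v : V, v ∈ f → v ∉ g) := by
  classical
  obtain ⟨j, hj⟩ := hke
  -- the star and the rest
  set S : Finset (Sym2 V) := G.edgeFinset.filter (fun e => x ∈ e) with hS
  set N : Finset (Sym2 V) := G.edgeFinset.filter (fun e => x ∉ e) with hN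
  have hSi : S = G.incidenceFinset x := by
    ext e
    simp only [hS, Finset.mem_filter, mem_incidenceFinset, incidenceSet, mem_edgeFinset,
      Set.mem_setOf_eq, Set.mem_sep_iff]
  have hScard : S.card = k / 2 := by
    rw [hSi, card_incidenceFinset_eq_degree, hx]
  have hsum : S.card + N.card = G.edgeFinset.card :=
    Finset.card_filter_add_card_filter_not _
  have hNcard : N.card = k / 2 := by omega
  -- extract a big matching
  have hbdd : BddAbove {m | ∃ M : G.Subgraph, M.IsMatching ∧ M.edgeSet.ncard = m} := by
    refine ⟨Fintype.card (Sym2 V), ?_⟩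
    rintro m ⟨M, -, rfl⟩
    calc M.edgeSet.ncard ≤ (Set.univ : Set (Sym2 V)).ncard :=
          Set.ncard_le_ncard (Set.subset_univ _) Set.finite_univ
      _ = Fintype.card (Sym2 V) := by simp [Set.ncard_univ]
  have hne : {m | ∃ M : G.Subgraph, M.IsMatching ∧ M.edgeSet.ncard = m}.Nonempty := by
    refine ⟨0, ⊥, ?_, by simp⟩
    intro v hv
    simp at hv
  have hmem := Nat.sSup_mem hne hbdd
  rw [matchingNumber] at hβ
  obtain ⟨M0, hM0, hcard0⟩ := hmem
  have hMbig : k / 2 ≤ M0.edgeSet.ncard := hcard0 ▸ hβ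
  have hfin : M0.edgeSet.Finite := Set.toFinite _
  set MF : Finset (Sym2 V) := hfin.toFinset with hMF
  have hMFcard : MF.card = M0.edgeSet.ncard := (M0.edgeSet.ncard_eq_toFinset_card hfin).symm
  have hMFmem : ∀ f, f ∈ MF ↔ f ∈ M0.edgeSet := fun f => hfin.mem_toFinset
  -- any two edges of the matching sharing a vertex are equal
  have huniq : ∀ f ∈ M0.edgeSet, ∀ g ∈ M0.edgeSet, ∀ v : V, v ∈ f → v ∈ g → f = g := by
    intro f hf g hg v hvf hvg
    obtain ⟨a, rfl⟩ := Sym2.mem_iff_exists.1 hvf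
    obtain ⟨b, rfl⟩ := Sym2.mem_iff_exists.1 hvg
    have hadj1 : M0.Adj v a := Subgraph.mem_edgeSet.1 hf
    have hadj2 : M0.Adj v b := Subgraph.mem_edgeSet.1 hg
    obtain ⟨w, _, hwu⟩ := hM0 (M0.edge_vert hadj1)
    rw [hwu a hadj1, hwu b hadj2]
  -- at most one matching edge contains x
  have hxcard : (MF.filter (fun e => x ∈ e)).card ≤ 1 := by
    rw [Finset.card_le_one]
    intro a ha b hb
    rw [Finset.mem_filter] at ha hb
    exact huniq a ((hMFmem a).1 ha.1) b ((hMFmem b).1 hb.1) x ha.2 hb.2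
  set MN : Finset (Sym2 V) := MF.filter (fun e => x ∉ e) with hMN
  have hsum2 : (MF.filter (fun e => x ∈ e)).card + MN.card = MF.card :=
    Finset.card_filter_add_card_filter_not _
  have hMNcard : k / 2 - 1 ≤ MN.card := by omega
  have hMNsub : MN ⊆ N := by
    intro f hf
    rw [hMN, Finset.mem_filter] at hf
    rw [hN, Finset.mem_filter, mem_edgeFinset]
    exact ⟨M0.edgeSet_subset ((hMFmem f).1 hf.1), hf.2⟩
  -- choose the edge e to delete
  have hchoice : ∃ e ∈ N, N.erase e ⊆ MF := by
    by_cases hall : N ⊆ MF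
    · obtain ⟨e, he⟩ := Finset.card_pos.1 (by omega : 0 < N.card)
      exact ⟨e, he, (Finset.erase_subset _ _).trans hall⟩
    · obtain ⟨e, heN, heM⟩ := Finset.not_subset.1 hall
      refine ⟨e, heN, ?_⟩
      have hsub : MN ⊆ N.erase e := by
        intro f hf
        refine Finset.mem_erase.2 ⟨?_, hMNsub hf⟩
        rintro rfl
        exact heM (Finset.filter_subset _ _ hf)
      have hcle : (N.erase e).card ≤ MN.card := by
        rw [Finset.card_erase_of_mem heN, hNcard]
        exact hMNcard
      intro f hf
      have hf' : f ∈ MN := (Finset.eq_of_subset_of_card_le hsub hcle).symm ▸ hf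
      exact Finset.filter_subset _ _ hf'
  obtain ⟨e, heN, hesub⟩ := hchoice
  have hxe : x ∉ e := (Finset.mem_filter.1 heN).2
  have heG : e ∈ G.edgeFinset := (Finset.mem_filter.1 heN).1
  refine ⟨e, heG, S, N.erase e, ?_, ?_, hScard, ?_, ?_, ?_⟩
  · refine Finset.disjoint_left.2 ?_
    intro f hfS hfM
    exact (Finset.mem_filter.1 (Finset.mem_of_mem_erase hfM)).2 (Finset.mem_filter.1 hfS).2
  · have heS : e ∉ S := fun h => hxe (Finset.mem_filter.1 h).2
    have hSN : S ∪ N = G.edgeFinset := Finset.filter_union_filter_not_eq _ _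
    rw [← hSN, Finset.erase_union_distrib, Finset.erase_eq_of_notMem heS]
  · exact fun f hf => (Finset.mem_filter.1 hf).2
  · rw [Finset.card_erase_of_mem heN, hNcard]
  · intro f hf g hg hfg v hvf hvg
    exact hfg (huniq f ((hMFmem f).1 (hesub hf)) g ((hMFmem g).1 (hesub hg)) v hvf hvg)
end

section
/- For all positive integers s ≤ t and all n, every K_{s,t}-free graph on n vertices has at most (1/2)((t−1)^{1/s} n^{2−1/s} + (s−1)n) edges. -/
open SimpleGraph

private lemma kst_nat_pow_le_descFactorial (d s : ℕ) :
    (d - (s - 1)) ^ s ≤ d.descFactorial s := by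
  rw [Nat.descFactorial_eq_prod_range]
  calc (d - (s - 1)) ^ s = ∏ _i ∈ Finset.range s, (d - (s - 1)) := by
        rw [Finset.prod_const, Finset.card_range]
    _ ≤ ∏ i ∈ Finset.range s, (d - i) := by
        refine Finset.prod_le_prod' fun i hi => ?_
        exact Nat.sub_le_sub_left (by have := Finset.mem_range.1 hi; omega) d

private lemma kst_real_bound (d s : ℕ) (hs : 1 ≤ s) :
    (max ((d : ℝ) - ((s : ℝ) - 1)) 0) ^ s ≤ (s.factorial : ℝ) * (d.choose s) := by
  rcases le_or_gt ((d : ℝ) - ((s : ℝ) - 1)) 0 with h | h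
  · rw [max_eq_right h, zero_pow (by omega)]
    positivity
  · rw [max_eq_left h.le]
    have hd : s - 1 ≤ d := by
      by_contra hc
      push_neg at hc
      have hds : (d : ℕ) + 1 ≤ s := by omega
      have : ((d : ℕ) : ℝ) + 1 ≤ (s : ℝ) := by exact_mod_cast hds
      linarith
    have hcast : (d : ℝ) - ((s : ℝ) - 1) = ((d - (s - 1) : ℕ) : ℝ) := by
      rw [Nat.cast_sub hd, Nat.cast_sub hs]
      push_cast
      ring
    rw [hcast, ← Nat.cast_pow]
    have h2 := kst_nat_pow_le_descFactorial d s
    rw [Nat.descFactorial_eq_factorial_mul_choose] at h2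
    exact_mod_cast h2

private lemma kst_count_bound {V : Type*} [Fintype V] [DecidableEq V] (G : SimpleGraph V)
    [DecidableRel G.Adj] (s t : ℕ) (ht : 1 ≤ t)
    (hfree : ¬ ∃ (A B : Finset V), Disjoint A B ∧ A.card = s ∧ B.card = t ∧
      ∀ a ∈ A, ∀ b ∈ B, G.Adj a b) :
    ∑ v : V, (G.degree v).choose s ≤ (t - 1) * (Fintype.card V).choose s := by
  classical
  have key : ∀ S ∈ (Finset.univ : Finset V).powersetCard s,
      (Finset.univ.filter fun v => S ⊆ G.neighborFinset v).card ≤ t - 1 := by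
    intro S hS
    rw [Finset.mem_powersetCard] at hS
    by_contra hlt
    push_neg at hlt
    obtain ⟨B, hBsub, hBcard⟩ := Finset.exists_subset_card_eq
      (show t ≤ (Finset.univ.filter fun v => S ⊆ G.neighborFinset v).card by omega)
    refine hfree ⟨S, B, ?_, hS.2, hBcard, ?_⟩
    · rw [Finset.disjoint_left]
      intro v hvS hvB
      have hmem := hBsub hvB
      rw [Finset.mem_filter] at hmem
      have : v ∈ G.neighborFinset v := hmem.2 hvS
      rw [SimpleGraph.mem_neighborFinset] at this
      exact G.irrefl this
    · intro a ha b hb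
      have hmem := hBsub hb
      rw [Finset.mem_filter] at hmem
      have : a ∈ G.neighborFinset b := hmem.2 ha
      rw [SimpleGraph.mem_neighborFinset] at this
      exact this.symm
  have hset : ∀ v : V, (G.neighborFinset v).powersetCard s =
      ((Finset.univ : Finset V).powersetCard s).filter (· ⊆ G.neighborFinset v) := by
    intro v
    ext S
    simp only [Finset.mem_powersetCard, Finset.mem_filter, Finset.subset_univ, true_and]
    tauto
  calc ∑ v : V, (G.degree v).choose s
      = ∑ v : V, ((G.neighborFinset v).powersetCard s).card := by
        refine Finset.sum_congr rfl fun v _ => ?_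
        rw [Finset.card_powersetCard, SimpleGraph.card_neighborFinset_eq_degree]
    _ = ∑ v : V, ∑ S ∈ (Finset.univ : Finset V).powersetCard s,
          (if S ⊆ G.neighborFinset v then 1 else 0) := by
        refine Finset.sum_congr rfl fun v _ => ?_
        rw [hset v, Finset.card_filter]
    _ = ∑ S ∈ (Finset.univ : Finset V).powersetCard s,
          (Finset.univ.filter fun v => S ⊆ G.neighborFinset v).card := by
        rw [Finset.sum_comm]
        exact Finset.sum_congr rfl fun S _ => (Finset.card_filter _ _).symm
    _ ≤ ∑ _S ∈ (Finset.univ : Finset V).powersetCard s, (t - 1) :=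
        Finset.sum_le_sum key
    _ = (t - 1) * (Fintype.card V).choose s := by
        rw [Finset.sum_const, smul_eq_mul, Finset.card_powersetCard, Finset.card_univ,
          mul_comm]

theorem stmt11 {V : Type*} [Fintype V] [DecidableEq V] (G : SimpleGraph V)
    [DecidableRel G.Adj] (s t n : ℕ) (hs : 1 ≤ s) (hst : s ≤ t)
    (hcard : Fintype.card V = n)
    (hfree : ¬ ∃ (A B : Finset V), Disjoint A B ∧ A.card = s ∧ B.card = t ∧
      ∀ a ∈ A, ∀ b ∈ B, G.Adj a b) :
    (G.edgeFinset.card : ℝ) ≤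
      (1 / 2) * (((t : ℝ) - 1) ^ ((1 : ℝ) / (s : ℝ)) * (n : ℝ) ^ ((2 : ℝ) - 1 / (s : ℝ))
        + ((s : ℝ) - 1) * (n : ℝ)) := by
  classical
  obtain ⟨k, hk⟩ : ∃ k, s = k + 1 := ⟨s - 1, by omega⟩
  have ht : 1 ≤ t := hs.trans hst
  have ht1 : (0 : ℝ) ≤ (t : ℝ) - 1 := by
    have : (1 : ℝ) ≤ (t : ℝ) := by exact_mod_cast ht
    linarith
  have hs1 : (0 : ℝ) ≤ (s : ℝ) - 1 := by
    have : (1 : ℝ) ≤ (s : ℝ) := by exact_mod_cast hs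
    linarith
  have hsR : (0 : ℝ) < (s : ℝ) := by exact_mod_cast hs
  have hfirst : (0 : ℝ) ≤ ((t : ℝ) - 1) ^ ((1 : ℝ) / (s : ℝ)) *
      (n : ℝ) ^ ((2 : ℝ) - 1 / (s : ℝ)) :=
    mul_nonneg (Real.rpow_nonneg ht1 _) (Real.rpow_nonneg (Nat.cast_nonneg n) _)
  set e : ℕ := G.edgeFinset.card with he
  rcases le_or_gt (2 * (e : ℝ)) (((s : ℝ) - 1) * n) with hcase | hcase
  · linarith
  -- main case
  have hn0 : 0 < n := by
    rcases Nat.eq_zero_or_pos n with h0 | h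
    · exfalso
      have h2 := G.card_edgeFinset_le_card_choose_two
      rw [hcard, h0, Nat.choose_eq_zero_of_lt (by norm_num)] at h2
      have he0 : e = 0 := Nat.le_zero.1 h2
      rw [he0, h0] at hcase
      norm_num at hcase
    · exact h
  have hsum2 : (∑ v : V, (G.degree v : ℝ)) = 2 * (e : ℝ) := by
    have h2 := G.sum_degrees_eq_twice_card_edges
    exact_mod_cast congrArg (Nat.cast : ℕ → ℝ) h2
  set f : V → ℝ := fun v => max ((G.degree v : ℝ) - ((s : ℝ) - 1)) 0 with hf
  have hfnn : ∀ v ∈ (Finset.univ : Finset V), 0 ≤ f v := fun v _ => le_max_right _ _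
  -- sum of f bounds D
  set D : ℝ := 2 * (e : ℝ) - ((s : ℝ) - 1) * n with hD
  have hDpos : 0 < D := by rw [hD]; linarith
  have hDle : D ≤ ∑ v : V, f v := by
    have h1 : ∑ v : V, ((G.degree v : ℝ) - ((s : ℝ) - 1)) ≤ ∑ v : V, f v :=
      Finset.sum_le_sum fun v _ => le_max_left _ _
    rw [Finset.sum_sub_distrib, hsum2, Finset.sum_const, Finset.card_univ, hcard,
      nsmul_eq_mul] at h1
    rw [hD]
    linarith
  -- power sum bound
  have hA : ∑ v : V, f v ^ s ≤ (s.factorial : ℝ) * ∑ v : V, ((G.degree v).choose s : ℝ) := by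
    rw [Finset.mul_sum]
    exact Finset.sum_le_sum fun v _ => kst_real_bound _ s hs
  have hBnat : s.factorial * ∑ v : V, (G.degree v).choose s ≤ (t - 1) * n ^ s := by
    calc s.factorial * ∑ v : V, (G.degree v).choose s
        ≤ s.factorial * ((t - 1) * n.choose s) :=
          Nat.mul_le_mul_left _ (hcard ▸ kst_count_bound G s t ht hfree)
      _ = (t - 1) * (s.factorial * n.choose s) := by ring
      _ = (t - 1) * n.descFactorial s := by rw [Nat.descFactorial_eq_factorial_mul_choose]
      _ ≤ (t - 1) * n ^ s := Nat.mul_le_mul_left _ (Nat.descFactorial_le_pow n s)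
  have hB : (s.factorial : ℝ) * ∑ v : V, ((G.degree v).choose s : ℝ) ≤
      ((t : ℝ) - 1) * (n : ℝ) ^ s := by
    have h2 : ((s.factorial * ∑ v : V, (G.degree v).choose s : ℕ) : ℝ) ≤
        (((t - 1) * n ^ s : ℕ) : ℝ) := by exact_mod_cast hBnat
    push_cast [Nat.cast_sub ht] at h2
    linarith [h2]
  have hC := pow_sum_div_card_le_sum_pow (s := (Finset.univ : Finset V)) (f := f) hfnn k
  rw [Finset.card_univ, hcard] at hC
  rw [← hk] at hC
  -- D^s ≤ (t-1) * n^(2s-1)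
  have hnk : (0 : ℝ) < (n : ℝ) ^ k := by positivity
  have hEs : D ^ s ≤ (∑ v : V, f v) ^ s := by
    gcongr
  have hkey : D ^ s ≤ ((t : ℝ) - 1) * (n : ℝ) ^ (2 * s - 1) := by
    have h1 : D ^ s / (n : ℝ) ^ k ≤ ((t : ℝ) - 1) * (n : ℝ) ^ s := by
      calc D ^ s / (n : ℝ) ^ k ≤ (∑ v : V, f v) ^ s / (n : ℝ) ^ k := by gcongr
        _ ≤ ∑ v : V, f v ^ s := hC
        _ ≤ ((t : ℝ) - 1) * (n : ℝ) ^ s := hA.trans hB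
    rw [div_le_iff₀ hnk] at h1
    calc D ^ s ≤ ((t : ℝ) - 1) * (n : ℝ) ^ s * (n : ℝ) ^ k := h1
      _ = ((t : ℝ) - 1) * (n : ℝ) ^ (2 * s - 1) := by
          rw [mul_assoc, ← pow_add]
          congr 2
          omega
  -- take s-th roots
  have hfinal : D ≤ ((t : ℝ) - 1) ^ ((1 : ℝ) / (s : ℝ)) * (n : ℝ) ^ ((2 : ℝ) - 1 / (s : ℝ)) := by
    have h1 : D = (D ^ s) ^ ((1 : ℝ) / (s : ℝ)) := by
      rw [← Real.rpow_natCast D s, ← Real.rpow_mul hDpos.le, mul_one_div_cancel hsR.ne',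
        Real.rpow_one]
    have h2 : (D ^ s) ^ ((1 : ℝ) / (s : ℝ)) ≤
        (((t : ℝ) - 1) * (n : ℝ) ^ (2 * s - 1)) ^ ((1 : ℝ) / (s : ℝ)) :=
      Real.rpow_le_rpow (pow_nonneg hDpos.le _) hkey (by positivity)
    have h3 : (((t : ℝ) - 1) * (n : ℝ) ^ (2 * s - 1)) ^ ((1 : ℝ) / (s : ℝ)) =
        ((t : ℝ) - 1) ^ ((1 : ℝ) / (s : ℝ)) *
          ((n : ℝ) ^ (2 * s - 1 : ℕ)) ^ ((1 : ℝ) / (s : ℝ)) :=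
      Real.mul_rpow ht1 (by positivity)
    have h4 : ((n : ℝ) ^ (2 * s - 1 : ℕ)) ^ ((1 : ℝ) / (s : ℝ)) =
        (n : ℝ) ^ ((2 : ℝ) - 1 / (s : ℝ)) := by
      rw [← Real.rpow_natCast (n : ℝ) (2 * s - 1), ← Real.rpow_mul (Nat.cast_nonneg n)]
      congr 1
      have hc : ((2 * s - 1 : ℕ) : ℝ) = 2 * (s : ℝ) - 1 := by
        rw [Nat.cast_sub (by omega : 1 ≤ 2 * s)]
        push_cast
        ring
      rw [hc]
      field_simp
    rw [h1]
    rw [h3, h4] at h2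
    exact h2
  rw [hD] at hfinal
  linarith
end

section
/- For every connected graph H and integer q ≥ 1, ex(n, qH) ≤ ex(n, H) + (q−1)·|V(H)|·n, where qH denotes q vertex-disjoint copies of H. In particular, ex(n, qH) = ex(n,H) + O(n). -/
open SimpleGraph

/-- `G` contains a copy of `H` as a subgraph. -/
def HasCopy {γ β : Type*} (G : SimpleGraph γ) (H : SimpleGraph β) : Prop :=
  ∃ f : β → γ, Function.Injective f ∧ ∀ a b : β, H.Adj a b → G.Adj (f a) (f b)

/-- The Turán number `ex(n, H)`: the maximum number of edges of an `H`-free graph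
on `n` vertices. -/
noncomputable def exNum {β : Type*} (n : ℕ) (H : SimpleGraph β) : ℕ :=
  sSup {m | ∃ G : SimpleGraph (Fin n), ¬ HasCopy G H ∧ G.edgeSet.ncard = m}

/-- `qH`: the disjoint union of `q` copies of `H`. -/
def nCopies {β : Type*} (H : SimpleGraph β) (q : ℕ) : SimpleGraph (β × Fin q) where
  Adj x y := x.2 = y.2 ∧ H.Adj x.1 y.1
  symm := ⟨fun x y h => ⟨h.1.symm, h.2.symm⟩⟩
  loopless := ⟨fun x h => H.irrefl h.2⟩

-- auxiliary lemmas

lemma aux_edge_ncard_le {n : ℕ} (G : SimpleGraph (Fin n)) : G.edgeSet.ncard ≤ n * n := by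
  have h1 : G.edgeSet.ncard ≤ (Set.univ : Set (Sym2 (Fin n))).ncard :=
    Set.ncard_le_ncard (Set.subset_univ _) Set.finite_univ
  have h2 : (Set.univ : Set (Sym2 (Fin n))).ncard = (n + 1).choose 2 := by
    rw [Set.ncard_univ, Nat.card_eq_fintype_card, Sym2.card, Fintype.card_fin]
  have h3 : (n + 1).choose 2 ≤ n * n := by
    rw [Nat.choose_two_right]
    simp only [Nat.add_sub_cancel]
    have : (n + 1) * n ≤ 2 * (n * n) := by nlinarith [Nat.le_mul_of_pos_left n (Nat.zero_lt_succ 0)]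
    calc (n + 1) * n / 2 ≤ 2 * (n * n) / 2 := Nat.div_le_div_right this
      _ = n * n := by omega
  omega

lemma aux_le_exNum {β : Type*} {n : ℕ} {H : SimpleGraph β} (G : SimpleGraph (Fin n))
    (h : ¬ HasCopy G H) : G.edgeSet.ncard ≤ exNum n H := by
  apply le_csSup
  · exact ⟨n * n, by rintro m ⟨G', _, rfl⟩; exact aux_edge_ncard_le G'⟩
  · exact ⟨G, h, rfl⟩

lemma aux_exNum_le {β : Type*} {n : ℕ} {H : SimpleGraph β} {k : ℕ}
    (h : ∀ G : SimpleGraph (Fin n), ¬ HasCopy G H → G.edgeSet.ncard ≤ k) :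
    exNum n H ≤ k :=
  csSup_le' (by rintro m ⟨G, hG, rfl⟩; exact h G hG)

lemma aux_exists_adj {β : Type*} [Nontrivial β] {H : SimpleGraph β} (hconn : H.Connected)
    (x : β) : ∃ y, H.Adj x y := by
  obtain ⟨z, hz⟩ := exists_ne x
  obtain ⟨w⟩ := hconn x z
  cases w with
  | nil => exact absurd rfl hz.symm
  | cons h _ => exact ⟨_, h⟩

lemma aux_count {n : ℕ} (G G' : SimpleGraph (Fin n)) (S : Set (Fin n))
    (hsub : ∀ a b, G.Adj a b → G'.Adj a b ∨ a ∈ S ∨ b ∈ S) :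
    G.edgeSet.ncard ≤ G'.edgeSet.ncard + S.ncard * n := by
  set T : Set (Sym2 (Fin n)) := (fun p : Fin n × Fin n => s(p.1, p.2)) '' (S ×ˢ Set.univ) with hT
  have hsubset : G.edgeSet ⊆ G'.edgeSet ∪ T := by
    intro e he
    induction e with
    | _ a b =>
      rw [mem_edgeSet] at he
      rcases hsub a b he with h | h | h
      · exact Or.inl (mem_edgeSet G' |>.mpr h)
      · exact Or.inr ⟨(a, b), ⟨h, Set.mem_univ _⟩, rfl⟩
      · exact Or.inr ⟨(b, a), ⟨h, Set.mem_univ _⟩, Sym2.eq_swap⟩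
  have hTcard : T.ncard ≤ S.ncard * n := by
    have h1 : T.ncard ≤ (S ×ˢ (Set.univ : Set (Fin n))).ncard := Set.ncard_image_le (Set.toFinite _)
    have h2 : (S ×ˢ (Set.univ : Set (Fin n))).ncard = S.ncard * n := by
      rw [← Nat.card_coe_set_eq, Nat.card_congr (Equiv.Set.prod S Set.univ), Nat.card_prod,
        Nat.card_coe_set_eq, Nat.card_coe_set_eq, Set.ncard_univ, Nat.card_eq_fintype_card,
        Fintype.card_fin]
    omega
  calc G.edgeSet.ncard ≤ (G'.edgeSet ∪ T).ncard :=
        Set.ncard_le_ncard hsubset (Set.toFinite _)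
    _ ≤ G'.edgeSet.ncard + T.ncard := Set.ncard_union_le _ _
    _ ≤ G'.edgeSet.ncard + S.ncard * n := by omega

theorem stmt19 {β : Type*} [Fintype β] (H : SimpleGraph β) (hconn : H.Connected)
    (q : ℕ) (hq : 1 ≤ q) (n : ℕ) :
    exNum n (nCopies H q) ≤ exNum n H + (q - 1) * Fintype.card β * n := by
  have hne : Nonempty β := hconn.nonempty
  rcases subsingleton_or_nontrivial β with hsub | hnt
  · -- β is a single vertex
    have hcard : Fintype.card β = 1 := by
      have h1 : Fintype.card β ≤ 1 := Fintype.card_le_one_iff_subsingleton.mpr hsub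
      have h2 : 0 < Fintype.card β := Fintype.card_pos
      omega
    apply aux_exNum_le
    intro G hG
    by_cases hle : q ≤ n
    · exfalso
      apply hG
      have : Fintype.card (β × Fin q) ≤ Fintype.card (Fin n) := by
        simp [hcard, hle]
      obtain ⟨f⟩ := Function.Embedding.nonempty_of_card_le this
      refine ⟨f, f.injective, fun a b hab => ?_⟩
      exact absurd (Subsingleton.elim a.1 b.1 ▸ hab.2) (H.loopless.irrefl a.1 ·)
    · have h1 : G.edgeSet.ncard ≤ n * n := aux_edge_ncard_le G
      have : n * n ≤ (q - 1) * Fintype.card β * n := by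
        rw [hcard]
        have : n ≤ q - 1 := by omega
        nlinarith
      omega
  · -- main case: every vertex of H has a neighbor
    apply aux_exNum_le
    have key : ∀ q, 1 ≤ q → ∀ G : SimpleGraph (Fin n), ¬ HasCopy G (nCopies H q) →
        G.edgeSet.ncard ≤ exNum n H + (q - 1) * Fintype.card β * n := by
      intro q hq
      induction q, hq using Nat.le_induction with
      | base =>
        intro G hG
        have : ¬ HasCopy G H := by
          rintro ⟨f, hfi, hfa⟩
          exact hG ⟨fun p => f p.1, fun p p' h => by
            have := hfi h
            exact Prod.ext this (Subsingleton.elim _ _),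
            fun a b hab => hfa _ _ hab.2⟩
        simpa using aux_le_exNum G this
      | succ q hq ih =>
        intro G hG
        by_cases hH : HasCopy G H
        · obtain ⟨f, hfi, hfa⟩ := hH
          set S := Set.range f with hS
          set G' : SimpleGraph (Fin n) :=
            { Adj := fun a b => G.Adj a b ∧ a ∉ S ∧ b ∉ S
              symm := ⟨fun a b h => ⟨h.1.symm, h.2.2, h.2.1⟩⟩
              loopless := ⟨fun a h => G.loopless.irrefl a h.1⟩ } with hG'
          have hG'free : ¬ HasCopy G' (nCopies H q) := by
            rintro ⟨g, hgi, hga⟩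
            apply hG
            have hnotS : ∀ p : β × Fin q, g p ∉ S := by
              rintro ⟨x, i⟩
              obtain ⟨y, hy⟩ := aux_exists_adj hconn x
              exact (hga (x, i) (y, i) ⟨rfl, hy⟩).2.1
            refine ⟨fun p => if h : (p.2 : ℕ) < q then g (p.1, ⟨p.2, h⟩) else f p.1, ?_, ?_⟩
            · rintro ⟨x, i⟩ ⟨y, j⟩ hxy
              simp only at hxy
              by_cases hi : (i : ℕ) < q <;> by_cases hj : (j : ℕ) < q <;>
                simp only [hi, hj, dif_pos, dif_neg, dite_true, dite_false] at hxy
              · have h1 := hgi hxy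
                have hx : x = y := congrArg Prod.fst h1
                have h2 : (⟨(i : ℕ), hi⟩ : Fin q) = ⟨(j : ℕ), hj⟩ := congrArg Prod.snd h1
                have h3 : (i : ℕ) = (j : ℕ) := congrArg (Fin.val : Fin q → ℕ) h2
                exact Prod.ext hx (Fin.ext h3)
              · exact absurd (hxy ▸ Set.mem_range_self y) (hnotS (x, ⟨i, hi⟩))
              · exact absurd (hxy ▸ Set.mem_range_self x) (hnotS (y, ⟨j, hj⟩))
              · have hx : x = y := hfi hxy
                have : (i : ℕ) = (j : ℕ) := by omega
                exact Prod.ext hx (Fin.ext this)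
            · rintro ⟨x, i⟩ ⟨y, j⟩ ⟨hij, hxy⟩
              simp only at hij
              subst hij
              by_cases hi : (i : ℕ) < q
              · simpa only [dif_pos hi] using (hga (x, ⟨i, hi⟩) (y, ⟨i, hi⟩) ⟨rfl, hxy⟩).1
              · simpa only [dif_neg hi] using hfa x y hxy
          have hcount : G.edgeSet.ncard ≤ G'.edgeSet.ncard + S.ncard * n := by
            apply aux_count
            intro a b hab
            by_cases ha : a ∈ S
            · exact Or.inr (Or.inl ha)
            · by_cases hb : b ∈ S
              · exact Or.inr (Or.inr hb)
              · exact Or.inl ⟨hab, ha, hb⟩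
          have hScard : S.ncard ≤ Fintype.card β := by
            rw [hS]
            calc (Set.range f).ncard ≤ (Set.univ : Set β).ncard := by
                  rw [← Set.image_univ]; exact Set.ncard_image_le (Set.toFinite _)
              _ = Fintype.card β := by rw [Set.ncard_univ, Nat.card_eq_fintype_card]
          have hih := ih G' hG'free
          have : S.ncard * n ≤ Fintype.card β * n := Nat.mul_le_mul_right n hScard
          have hq1 : q + 1 - 1 = q := rfl
          have hqm : (q - 1) * Fintype.card β * n + Fintype.card β * n
              = q * Fintype.card β * n := by
            have : q - 1 + 1 = q := Nat.succ_pred_eq_of_pos hq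
            nlinarith [this]
          simp only [Nat.add_sub_cancel]
          omega
        · have := aux_le_exNum G hH
          omega
    exact key q hq
end
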